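/- For 0 ≤ r < 1 and θ ∈ ℝ, (1/(2π)) ∫_{-π/2}^{π/2} P(r, θ - t) dt = 1/2 + (1/π) · arctan( (2r/(1 - r^2)) · cos θ ), where P is the Poisson kernel. -/

import Mathlib

open Real

lemma poisson_antideriv (r : ℝ) (hr0 : 0 ≤ r) (hr1 : r < 1) (s : ℝ) :
    HasDerivAt (fun s => s + 2 * Real.arctan (r * Real.sin s / (1 - r * Real.cos s)))
      ((1 - r ^ 2) / (1 - 2 * r * Real.cos s + r ^ 2)) s := by
  have hden : (0:ℝ) < 1 - r * Real.cos s := by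
    nlinarith [Real.cos_le_one s, Real.neg_one_le_cos s]
  have hD : (0:ℝ) < 1 - 2 * r * Real.cos s + r ^ 2 := by
    nlinarith [Real.cos_le_one s, Real.neg_one_le_cos s]
  have hsc := Real.sin_sq_add_cos_sq s
  have hu : HasDerivAt (fun s => r * Real.sin s / (1 - r * Real.cos s))
      (((r * Real.cos s) * (1 - r * Real.cos s) -
        (r * Real.sin s) * (r * Real.sin s)) / (1 - r * Real.cos s) ^ 2) s := by
    have h1 : HasDerivAt (fun s => r * Real.sin s) (r * Real.cos s) s :=
      (Real.hasDerivAt_sin s).const_mul r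
    have h2 : HasDerivAt (fun s => 1 - r * Real.cos s) (r * Real.sin s) s := by
      have := ((Real.hasDerivAt_cos s).const_mul r).const_sub 1
      simpa using this
    exact h1.div h2 hden.ne'
  have hnum : (r * Real.cos s) * (1 - r * Real.cos s) -
      (r * Real.sin s) * (r * Real.sin s) = r * Real.cos s - r ^ 2 := by
    linear_combination (-(r ^ 2)) * hsc
  rw [hnum] at hu
  have harc := hu.arctan
  have h := ((hasDerivAt_id s).add (harc.const_mul 2))
  convert h using 1
  · rfl
  · rfl
  · rfl
  have e1 : 1 + (r * Real.sin s / (1 - r * Real.cos s)) ^ 2 =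
      (1 - 2 * r * Real.cos s + r ^ 2) / (1 - r * Real.cos s) ^ 2 := by
    field_simp
    linear_combination r ^ 2 * hsc
  rw [e1]
  field_simp
  rw [one_add_div (by nlinarith)]
  ring

theorem poisson_integral_half_arc (r θ : ℝ) (hr0 : 0 ≤ r) (hr1 : r < 1) :
    (1 / (2 * π)) * ∫ t in (-(π / 2))..(π / 2),
        (1 - r ^ 2) / (1 - 2 * r * Real.cos (θ - t) + r ^ 2) =
      1 / 2 + (1 / π) * Real.arctan ((2 * r / (1 - r ^ 2)) * Real.cos θ) := by
  have hpi : π ≠ 0 := Real.pi_ne_zero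
  have hr2 : r ^ 2 < 1 := by nlinarith
  have hD : ∀ s : ℝ, (0:ℝ) < 1 - 2 * r * Real.cos s + r ^ 2 := fun s => by
    nlinarith [Real.cos_le_one s, Real.neg_one_le_cos s]
  have hcont : Continuous fun s : ℝ => (1 - r ^ 2) / (1 - 2 * r * Real.cos s + r ^ 2) :=
    continuous_const.div (by continuity) (fun s => (hD s).ne')
  have hchg : (∫ t in (-(π / 2))..(π / 2),
        (1 - r ^ 2) / (1 - 2 * r * Real.cos (θ - t) + r ^ 2)) =
      ∫ s in (θ - π / 2)..(θ - -(π / 2)),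
        (1 - r ^ 2) / (1 - 2 * r * Real.cos s + r ^ 2) :=
    intervalIntegral.integral_comp_sub_left
      (fun s => (1 - r ^ 2) / (1 - 2 * r * Real.cos s + r ^ 2)) θ
  rw [hchg]
  rw [intervalIntegral.integral_eq_sub_of_hasDerivAt
      (fun s _ => poisson_antideriv r hr0 hr1 s) (hcont.intervalIntegrable _ _)]
  have h1 : θ - -(π / 2) = θ + π / 2 := by ring
  rw [h1, Real.sin_add_pi_div_two, Real.cos_add_pi_div_two,
    Real.sin_sub_pi_div_two, Real.cos_sub_pi_div_two]
  have hsc := Real.sin_sq_add_cos_sq θ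
  have hps : (0:ℝ) < 1 - r * -Real.sin θ := by
    nlinarith [Real.sin_le_one θ, Real.neg_one_le_sin θ]
  have hms : (0:ℝ) < 1 - r * Real.sin θ := by
    nlinarith [Real.sin_le_one θ, Real.neg_one_le_sin θ]
  have hss : (0:ℝ) < 1 - (r * Real.sin θ) ^ 2 := by nlinarith
  set a := r * Real.cos θ / (1 - r * -Real.sin θ) with ha
  have hneg : r * -Real.cos θ / (1 - r * Real.sin θ) =
      -(r * Real.cos θ / (1 - r * Real.sin θ)) := by ring
  rw [hneg, Real.arctan_neg]
  set b := r * Real.cos θ / (1 - r * Real.sin θ) with hb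
  have hkey : r * Real.cos θ * (r * Real.cos θ) + (r * Real.sin θ) ^ 2 = r ^ 2 := by
    linear_combination r ^ 2 * hsc
  have hab : a * b < 1 := by
    rw [ha, hb, div_mul_div_comm, div_lt_one (by nlinarith)]
    nlinarith [hkey, hr2]
  have hadd := Real.arctan_add hab
  have hp1 : (1:ℝ) + r * Real.sin θ ≠ 0 := by nlinarith [Real.neg_one_le_sin θ]
  have hp2 : (1:ℝ) - r * Real.sin θ ≠ 0 := hms.ne'
  have hp3 : (1:ℝ) - (r * Real.sin θ) ^ 2 ≠ 0 := hss.ne'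
  have hrw : (1:ℝ) - r * -Real.sin θ = 1 + r * Real.sin θ := by ring
  have hsum : a + b = 2 * r * Real.cos θ / (1 - (r * Real.sin θ) ^ 2) := by
    rw [ha, hb, hrw]
    rw [div_add_div _ _ hp1 hp2]
    congr 1 <;> ring
  have hprod : 1 - a * b = (1 - r ^ 2) / (1 - (r * Real.sin θ) ^ 2) := by
    rw [ha, hb, hrw, div_mul_div_comm]
    rw [eq_div_iff hp3, sub_mul, div_mul_eq_mul_div, one_mul,
      show (1 + r * Real.sin θ) * (1 - r * Real.sin θ) = 1 - (r * Real.sin θ) ^ 2 by ring,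
      mul_div_assoc, div_self hp3, mul_one]
    linear_combination -hkey
  have hval : (a + b) / (1 - a * b) = 2 * r / (1 - r ^ 2) * Real.cos θ := by
    rw [hsum, hprod]
    rw [div_div_div_comm]
    rw [div_self hss.ne', div_one]
    ring
  rw [hval] at hadd
  rw [show θ + π / 2 + 2 * Real.arctan a - (θ - π / 2 + 2 * -Real.arctan b) =
      π + 2 * (Real.arctan a + Real.arctan b) by ring, hadd]
  field_simp
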